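/- arXiv:2412.18372 — 2 statements merged into one kernel-verified Lean document; each statement's English description precedes it below -/
import Mathlib

section
/- Let [I,‖·‖_I] be a normed weighted holomorphic ideal and let [I^inj,‖·‖_{I^inj}] be its injective hull. Then [I,‖·‖_I] ≤ [I^inj,‖·‖_{I^inj}], and for every injective normed weighted holomorphic ideal [J,‖·‖_J] with [I,‖·‖_I] ≤ [J,‖·‖_J] one has [I^inj,‖·‖_{I^inj}] ≤ [J,‖·‖_J]; that is, [I^inj,‖·‖_{I^inj}] is the smallest injective normed weighted holomorphic ideal containing [I,‖·‖_I]. -/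
open scoped ENNReal
open Set

noncomputable section

universe u v w

/-- A bundled complex Banach space. -/
structure BanachSp : Type (u + 1) where
  α : Type u
  [grp : NormedAddCommGroup α]
  [mod : NormedSpace ℂ α]
  [cpl : CompleteSpace α]

attribute [instance] BanachSp.grp BanachSp.mod BanachSp.cpl

instance : CoeSort BanachSp (Type u) := ⟨BanachSp.α⟩

section Defs

variable {E : Type u} {F : Type v} [NormedAddCommGroup E] [NormedSpace ℂ E]
  [NormedAddCommGroup F] [NormedSpace ℂ F]

/-- `v` is a weight on `U`: continuous and strictly positive there. -/
def IsWeight (U : Set E) (v : E → ℝ) : Prop :=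
  ContinuousOn v U ∧ ∀ x ∈ U, 0 < v x

/-- `f` belongs to `H_v^∞(U, F)`: holomorphic on `U` with `sup_{x ∈ U} v x * ‖f x‖ < ∞`. -/
def HvBdd (U : Set E) (v : E → ℝ) (f : E → F) : Prop :=
  DifferentiableOn ℂ f U ∧ BddAbove ((fun x => v x * ‖f x‖) '' U)

/-- The weighted supremum norm `‖f‖_v = sup_{x ∈ U} v x * ‖f x‖`. -/
def hvNorm (U : Set E) (v : E → ℝ) (f : E → F) : ℝ :=
  sSup ((fun x => v x * ‖f x‖) '' U)

end Defs

section Iota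

variable (F : Type u) [NormedAddCommGroup F] [NormedSpace ℂ F]

/-- The closed unit ball of the dual space `F*`. -/
def BallDual : Type u := {φ : StrongDual ℂ F // ‖φ‖ ≤ 1}

instance : Nonempty (BallDual F) := ⟨⟨0, by simp⟩⟩

/-- `ℓ∞(B_{F*})`, the space of bounded scalar functions on the closed unit ball of `F*`. -/
abbrev Linf : Type u := lp (fun _ : BallDual F => ℂ) ∞

/-- The canonical embedding `ι_F : F → ℓ∞(B_{F*})`, `⟨ι_F y, φ⟩ = φ y`. -/
def iotaFun (y : F) : Linf F :=
  ⟨fun φ => φ.1 y, memℓp_infty ⟨‖y‖, by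
    rintro r ⟨φ, rfl⟩
    calc ‖φ.1 y‖ ≤ ‖φ.1‖ * ‖y‖ := φ.1.le_opNorm y
      _ ≤ 1 * ‖y‖ := by
          have := φ.2
          exact mul_le_mul_of_nonneg_right this (norm_nonneg y)
      _ = ‖y‖ := one_mul _⟩⟩

/-- The canonical embedding `ι_F : F → ℓ∞(B_{F*})` as a continuous linear map. -/
def iota : F →L[ℂ] Linf F :=
  LinearMap.mkContinuous
    { toFun := iotaFun F
      map_add' := by
        intro y z
        apply lp.ext
        rw [lp.coeFn_add]
        funext φ
        show φ.1 (y + z) = φ.1 y + φ.1 z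
        exact map_add φ.1 y z
      map_smul' := by
        intro c y
        apply lp.ext
        rw [lp.coeFn_smul]
        funext φ
        show φ.1 (c • y) = c • φ.1 y
        exact map_smul φ.1 c y }
    1 (by
      intro y
      rw [one_mul]
      refine lp.norm_le_of_forall_le (norm_nonneg y) fun φ => ?_
      calc ‖φ.1 y‖ ≤ ‖φ.1‖ * ‖y‖ := φ.1.le_opNorm y
        _ ≤ 1 * ‖y‖ := mul_le_mul_of_nonneg_right φ.2 (norm_nonneg y)
        _ = ‖y‖ := one_mul _)

/-- `ℓ∞(B_{F*})` as a bundled Banach space. -/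
def LinfSp : BanachSp.{u} := ⟨Linf F⟩

end Iota

/-- An assignment of a class of weighted holomorphic mappings, together with a
"norm" function, to every component `(U, v, F)`. -/
structure WHAssignment : Type (u + 1) where
  mem : ∀ (E : BanachSp.{u}) (U : Set E) (v : E → ℝ) (F : BanachSp.{u}), (E → F) → Prop
  nrm : ∀ (E : BanachSp.{u}) (U : Set E) (v : E → ℝ) (F : BanachSp.{u}), (E → F) → ℝ

/-- `[I, ‖·‖_I]` is a normed weighted holomorphic ideal. -/
structure IsNormedWHIdeal (I : WHAssignment.{u}) : Prop where
  mem_hv : ∀ (E : BanachSp.{u}) (U : Set E.α) (v : E.α → ℝ), IsOpen U → IsWeight U v →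
    ∀ (F : BanachSp.{u}) (f : E.α → F.α), I.mem E U v F f → HvBdd U v f
  zero_mem : ∀ (E : BanachSp.{u}) (U : Set E.α) (v : E.α → ℝ), IsOpen U → IsWeight U v →
    ∀ (F : BanachSp.{u}), I.mem E U v F (fun _ => 0)
  add_mem : ∀ (E : BanachSp.{u}) (U : Set E.α) (v : E.α → ℝ), IsOpen U → IsWeight U v →
    ∀ (F : BanachSp.{u}) (f g : E.α → F.α), I.mem E U v F f → I.mem E U v F g →
      I.mem E U v F (fun x => f x + g x)
  smul_mem : ∀ (E : BanachSp.{u}) (U : Set E.α) (v : E.α → ℝ), IsOpen U → IsWeight U v →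
    ∀ (F : BanachSp.{u}) (c : ℂ) (f : E.α → F.α), I.mem E U v F f →
      I.mem E U v F (fun x => c • f x)
  nrm_nonneg : ∀ (E : BanachSp.{u}) (U : Set E.α) (v : E.α → ℝ), IsOpen U → IsWeight U v →
    ∀ (F : BanachSp.{u}) (f : E.α → F.α), I.mem E U v F f → 0 ≤ I.nrm E U v F f
  nrm_eq_zero : ∀ (E : BanachSp.{u}) (U : Set E.α) (v : E.α → ℝ), IsOpen U → IsWeight U v →
    ∀ (F : BanachSp.{u}) (f : E.α → F.α), I.mem E U v F f → I.nrm E U v F f = 0 →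
      ∀ x ∈ U, f x = 0
  nrm_add_le : ∀ (E : BanachSp.{u}) (U : Set E.α) (v : E.α → ℝ), IsOpen U → IsWeight U v →
    ∀ (F : BanachSp.{u}) (f g : E.α → F.α), I.mem E U v F f → I.mem E U v F g →
      I.nrm E U v F (fun x => f x + g x) ≤ I.nrm E U v F f + I.nrm E U v F g
  nrm_smul : ∀ (E : BanachSp.{u}) (U : Set E.α) (v : E.α → ℝ), IsOpen U → IsWeight U v →
    ∀ (F : BanachSp.{u}) (c : ℂ) (f : E.α → F.α), I.mem E U v F f →
      I.nrm E U v F (fun x => c • f x) = ‖c‖ * I.nrm E U v F f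
  hv_le_nrm : ∀ (E : BanachSp.{u}) (U : Set E.α) (v : E.α → ℝ), IsOpen U → IsWeight U v →
    ∀ (F : BanachSp.{u}) (f : E.α → F.α), I.mem E U v F f →
      hvNorm U v f ≤ I.nrm E U v F f
  unit_mem : ∀ (E : BanachSp.{u}) (U : Set E.α) (v : E.α → ℝ), IsOpen U → IsWeight U v →
    ∀ (F : BanachSp.{u}) (h : E.α → ℂ), HvBdd U v h → ∀ y : F.α,
      I.mem E U v F (fun x => h x • y) ∧
        I.nrm E U v F (fun x => h x • y) = hvNorm U v h * ‖y‖
  comp_mem : ∀ (E : BanachSp.{u}) (U : Set E.α) (v : E.α → ℝ), IsOpen U → IsWeight U v →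
    ∀ (V : Set E.α), IsOpen V → V ⊆ U →
    ∀ h : E.α → E.α, DifferentiableOn ℂ h V → Set.MapsTo h V U →
    ∀ c : ℝ, 0 ≤ c → (∀ x ∈ V, v x ≤ c * v (h x)) →
    ∀ (F G : BanachSp.{u}) (T : F.α →L[ℂ] G.α) (f : E.α → F.α), I.mem E U v F f →
      I.mem E V v G (fun x => T (f (h x))) ∧
        I.nrm E V v G (fun x => T (f (h x))) ≤ ‖T‖ * I.nrm E U v F f * c

/-- `[I, ‖·‖_I]` is a Banach weighted holomorphic ideal: a normed one with complete components. -/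
structure IsBanachWHIdeal (I : WHAssignment.{u}) extends IsNormedWHIdeal I : Prop where
  complete : ∀ (E : BanachSp.{u}) (U : Set E.α) (v : E.α → ℝ), IsOpen U → IsWeight U v →
    ∀ (F : BanachSp.{u}) (f : ℕ → E.α → F.α), (∀ n, I.mem E U v F (f n)) →
      (∀ ε : ℝ, 0 < ε → ∃ N : ℕ, ∀ m ≥ N, ∀ n ≥ N,
        I.nrm E U v F (fun x => f m x - f n x) < ε) →
      ∃ g : E.α → F.α, I.mem E U v F g ∧
        ∀ ε : ℝ, 0 < ε → ∃ N : ℕ, ∀ n ≥ N, I.nrm E U v F (fun x => f n x - g x) < ε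

/-- Injectivity of a normed weighted holomorphic ideal. -/
def WHInjective (I : WHAssignment.{u}) : Prop :=
  ∀ (E : BanachSp.{u}) (U : Set E.α) (v : E.α → ℝ), IsOpen U → IsWeight U v →
  ∀ (F G : BanachSp.{u}) (f : E.α → F.α), HvBdd U v f →
  ∀ ι : F.α →ₗᵢ[ℂ] G.α, I.mem E U v G (fun x => ι (f x)) →
    I.mem E U v F f ∧ I.nrm E U v F f = I.nrm E U v G (fun x => ι (f x))

/-- The injective hull `[I^inj, ‖·‖_{I^inj}]` of a weighted holomorphic ideal. -/
def whInj (I : WHAssignment.{u}) : WHAssignment.{u} where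
  mem E U v F f := HvBdd U v f ∧ I.mem E U v (LinfSp F.α) (fun x => iota F.α (f x))
  nrm E U v F f := I.nrm E U v (LinfSp F.α) (fun x => iota F.α (f x))

/-- The order relation `[I, ‖·‖_I] ≤ [J, ‖·‖_J]` between weighted holomorphic ideals. -/
def WHle (I J : WHAssignment.{u}) : Prop :=
  ∀ (E : BanachSp.{u}) (U : Set E.α) (v : E.α → ℝ), IsOpen U → IsWeight U v →
  ∀ (F : BanachSp.{u}) (f : E.α → F.α), I.mem E U v F f →
    J.mem E U v F f ∧ J.nrm E U v F f ≤ I.nrm E U v F f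

/-- The domination property: `‖Σ λᵢ v(xᵢ) f(xᵢ)‖ ≤ ‖Σ λᵢ v(xᵢ) g(xᵢ)‖` for all finite families. -/
def Dominates {E : Type u} {F : Type v} {G : Type w} [NormedAddCommGroup E] [NormedSpace ℂ E]
    [NormedAddCommGroup F] [NormedSpace ℂ F] [NormedAddCommGroup G] [NormedSpace ℂ G]
    (U : Set E) (v : E → ℝ) (f : E → F) (g : E → G) : Prop :=
  ∀ (n : ℕ) (lam : Fin n → ℂ) (x : Fin n → E), (∀ i, x i ∈ U) →
    ‖∑ i, lam i • v (x i) • f (x i)‖ ≤ ‖∑ i, lam i • v (x i) • g (x i)‖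

/-! ### Auxiliary lemmas -/

lemma bddAbove_image_iff' {α : Type*} {U : Set α} {g : α → ℝ} :
    BddAbove (g '' U) ↔ ∃ M, ∀ x ∈ U, g x ≤ M := by
  constructor
  · rintro ⟨M, hM⟩
    exact ⟨M, fun x hx => hM (Set.mem_image_of_mem _ hx)⟩
  · rintro ⟨M, hM⟩
    refine ⟨M, ?_⟩
    rintro r ⟨x, hx, rfl⟩
    exact hM x hx

section IotaLemmas

variable {F : Type u} [NormedAddCommGroup F] [NormedSpace ℂ F]
variable {G : Type u} [NormedAddCommGroup G] [NormedSpace ℂ G]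

lemma iota_apply (y : F) (φ : BallDual F) : (iota F y : ∀ _ : BallDual F, ℂ) φ = φ.1 y := rfl

lemma norm_iota_le : ‖iota F‖ ≤ 1 :=
  LinearMap.mkContinuous_norm_le _ zero_le_one _

lemma norm_iota (y : F) : ‖iota F y‖ = ‖y‖ := by
  refine le_antisymm ?_ ?_
  · calc ‖iota F y‖ ≤ ‖iota F‖ * ‖y‖ := (iota F).le_opNorm y
      _ ≤ 1 * ‖y‖ := mul_le_mul_of_nonneg_right norm_iota_le (norm_nonneg y)
      _ = ‖y‖ := one_mul _
  · rcases eq_or_ne y 0 with rfl | hy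
    · rw [map_zero, norm_zero, norm_zero]
    · obtain ⟨g, hg1, hgy⟩ := exists_dual_vector ℂ y (norm_ne_zero_iff.mpr hy)
      have h1 : ‖(iota F y : ∀ _ : BallDual F, ℂ) ⟨g, hg1.le⟩‖ ≤ ‖iota F y‖ :=
        lp.norm_apply_le_norm (by simp) _ _
      change ‖g y‖ ≤ ‖iota F y‖ at h1
      rw [hgy] at h1
      rwa [RCLike.norm_ofReal, abs_norm] at h1

/-- The canonical embedding as a linear isometry. -/
def iotaLI : F →ₗᵢ[ℂ] Linf F :=
  ⟨(iota F).toLinearMap, fun y => norm_iota y⟩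

/-- Pull a dual-ball element of `G` back to a dual-ball element of `F` along `T`,
rescaled by `‖T‖⁻¹`. -/
def pullBall (T : F →L[ℂ] G) (ψ : BallDual G) : BallDual F :=
  ⟨‖T‖⁻¹ • (ψ.1.comp T), by
    rw [norm_smul, norm_inv, norm_norm]
    rcases eq_or_ne ‖T‖ 0 with h | h
    · simp [h]
    · have h2 : ‖ψ.1.comp T‖ ≤ ‖T‖ := by
        calc ‖ψ.1.comp T‖ ≤ ‖ψ.1‖ * ‖T‖ := ψ.1.opNorm_comp_le T
          _ ≤ 1 * ‖T‖ := mul_le_mul_of_nonneg_right ψ.2 (norm_nonneg T)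
          _ = ‖T‖ := one_mul _
      calc ‖T‖⁻¹ * ‖ψ.1.comp T‖ ≤ ‖T‖⁻¹ * ‖T‖ :=
            mul_le_mul_of_nonneg_left h2 (inv_nonneg.2 (norm_nonneg T))
        _ = 1 := inv_mul_cancel₀ h⟩

end IotaLemmas

section CoordOp

variable {α β : Type u} [Nonempty α] [Nonempty β]

/-- The operator `ℓ∞(α) → ℓ∞(β)` given by `u ↦ (ψ ↦ c * u (σ ψ))`. -/
def coordOp (c : ℝ) (hc : 0 ≤ c) (σ : β → α) :
    lp (fun _ : α => ℂ) ∞ →L[ℂ] lp (fun _ : β => ℂ) ∞ :=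
  LinearMap.mkContinuous
    { toFun := fun u => ⟨fun ψ => (c : ℂ) * u (σ ψ), memℓp_infty ⟨c * ‖u‖, by
        rintro r ⟨ψ, rfl⟩
        simp only [norm_mul, Complex.norm_real, Real.norm_eq_abs, abs_of_nonneg hc]
        exact mul_le_mul_of_nonneg_left (lp.norm_apply_le_norm (by simp) u (σ ψ)) hc⟩⟩
      map_add' := by
        intro u w
        apply lp.ext
        funext ψ
        show (c : ℂ) * (u + w) (σ ψ) = (c : ℂ) * u (σ ψ) + (c : ℂ) * w (σ ψ)
        rw [lp.coeFn_add, Pi.add_apply, mul_add]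
      map_smul' := by
        intro a u
        apply lp.ext
        funext ψ
        show (c : ℂ) * (a • u) (σ ψ) = a • ((c : ℂ) * u (σ ψ))
        rw [lp.coeFn_smul, Pi.smul_apply, smul_eq_mul, smul_eq_mul]
        ring }
    c (fun u => by
      refine lp.norm_le_of_forall_le (mul_nonneg hc (norm_nonneg u)) fun ψ => ?_
      show ‖(c : ℂ) * u (σ ψ)‖ ≤ c * ‖u‖
      simp only [norm_mul, Complex.norm_real, Real.norm_eq_abs, abs_of_nonneg hc]
      exact mul_le_mul_of_nonneg_left (lp.norm_apply_le_norm (by simp) u (σ ψ)) hc)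

lemma coordOp_apply (c : ℝ) (hc : 0 ≤ c) (σ : β → α) (u : lp (fun _ : α => ℂ) ∞) (ψ : β) :
    (coordOp c hc σ u : ∀ _ : β, ℂ) ψ = (c : ℂ) * u (σ ψ) := rfl

lemma coordOp_norm_le (c : ℝ) (hc : 0 ≤ c) (σ : β → α) : ‖coordOp c hc σ‖ ≤ c :=
  LinearMap.mkContinuous_norm_le _ hc _

end CoordOp

section PushExt

variable {F : Type u} [NormedAddCommGroup F] [NormedSpace ℂ F]
variable {G : Type u} [NormedAddCommGroup G] [NormedSpace ℂ G]

lemma pushOp_iota (T : F →L[ℂ] G) (y : F) :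
    coordOp ‖T‖ (norm_nonneg T) (pullBall T) (iota F y) = iota G (T y) := by
  apply lp.ext
  funext ψ
  show ((‖T‖ : ℝ) : ℂ) * (iota F y : ∀ _ : BallDual F, ℂ) (pullBall T ψ) = ψ.1 (T y)
  rw [iota_apply]
  show ((‖T‖ : ℝ) : ℂ) * ((‖T‖⁻¹ • ψ.1.comp T) y) = ψ.1 (T y)
  rcases eq_or_ne ‖T‖ 0 with h | h
  · have hT : T = 0 := norm_eq_zero.mp h
    simp [hT, h]
  · rw [ContinuousLinearMap.smul_apply, ContinuousLinearMap.comp_apply, Complex.real_smul,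
      ← mul_assoc, ← Complex.ofReal_mul, mul_inv_cancel₀ h,
      Complex.ofReal_one, one_mul]

lemma exists_dual_extension (ι : F →ₗᵢ[ℂ] G) (φ : StrongDual ℂ F) :
    ∃ ψ : StrongDual ℂ G, ‖ψ‖ ≤ ‖φ‖ ∧ ∀ y, ψ (ι y) = φ y := by
  set e : F ≃ₗ[ℂ] LinearMap.range ι.toLinearMap :=
    LinearEquiv.ofInjective ι.toLinearMap ι.injective with he_def
  have he : ∀ y : F, ((e y : LinearMap.range ι.toLinearMap) : G) = ι y := fun y =>
    LinearEquiv.ofInjective_apply _ y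
  have hnorm : ∀ z : LinearMap.range ι.toLinearMap, ‖e.symm z‖ = ‖z‖ := fun z => by
    rw [← ι.norm_map (e.symm z), ← he (e.symm z), e.apply_symm_apply]
    first
    | rfl
    | simp
  set f₀ : (LinearMap.range ι.toLinearMap) →L[ℂ] ℂ :=
    LinearMap.mkContinuous (φ.toLinearMap.comp (e.symm : _ →ₗ[ℂ] F)) ‖φ‖ (fun z => by
      show ‖φ (e.symm z)‖ ≤ ‖φ‖ * ‖z‖
      calc ‖φ (e.symm z)‖ ≤ ‖φ‖ * ‖e.symm z‖ := φ.le_opNorm _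
        _ = ‖φ‖ * ‖z‖ := by rw [hnorm]) with hf₀_def
  obtain ⟨ψ, hψ1, hψ2⟩ := exists_extension_norm_eq (LinearMap.range ι.toLinearMap) f₀
  refine ⟨ψ, ?_, ?_⟩
  · rw [hψ2]
    exact LinearMap.mkContinuous_norm_le _ (norm_nonneg φ) _
  · intro y
    have h1 : ψ ((e y : LinearMap.range ι.toLinearMap) : G) = f₀ (e y) := hψ1 (e y)
    rw [he y] at h1
    rw [h1]
    show φ (e.symm (e y)) = φ y
    rw [e.symm_apply_apply]

/-- A Hahn–Banach extension of `φ ∈ B_{F*}` along the isometric embedding `ι`. -/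
def extBall (ι : F →ₗᵢ[ℂ] G) (φ : BallDual F) : BallDual G :=
  ⟨Classical.choose (exists_dual_extension ι φ.1),
   le_trans (Classical.choose_spec (exists_dual_extension ι φ.1)).1 φ.2⟩

lemma extBall_spec (ι : F →ₗᵢ[ℂ] G) (φ : BallDual F) (y : F) :
    (extBall ι φ).1 (ι y) = φ.1 y :=
  (Classical.choose_spec (exists_dual_extension ι φ.1)).2 y

lemma extOp_iota (ι : F →ₗᵢ[ℂ] G) (y : F) :
    coordOp 1 zero_le_one (extBall ι) (iota G (ι y)) = iota F y := by
  apply lp.ext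
  funext φ
  show ((1 : ℝ) : ℂ) * (iota G (ι y) : ∀ _ : BallDual G, ℂ) (extBall ι φ) = φ.1 y
  rw [iota_apply, Complex.ofReal_one, one_mul]
  exact extBall_spec ι φ y

end PushExt

section HvBddLemmas

variable {E : Type u} [NormedAddCommGroup E] [NormedSpace ℂ E]
variable {F : Type u} [NormedAddCommGroup F] [NormedSpace ℂ F]
variable {G : Type u} [NormedAddCommGroup G] [NormedSpace ℂ G]

lemma hvBdd_zero {U : Set E} {v : E → ℝ} : HvBdd U v (fun _ => (0 : F)) :=
  ⟨differentiableOn_const 0, bddAbove_image_iff'.2 ⟨0, fun x hx => by simp⟩⟩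

lemma HvBdd.add' {U : Set E} {v : E → ℝ} {f g : E → F} (hw : IsWeight U v)
    (hf : HvBdd U v f) (hg : HvBdd U v g) : HvBdd U v (fun x => f x + g x) := by
  obtain ⟨M, hM⟩ := bddAbove_image_iff'.1 hf.2
  obtain ⟨N, hN⟩ := bddAbove_image_iff'.1 hg.2
  refine ⟨hf.1.add hg.1, bddAbove_image_iff'.2 ⟨M + N, fun x hx => ?_⟩⟩
  calc v x * ‖f x + g x‖ ≤ v x * (‖f x‖ + ‖g x‖) :=
        mul_le_mul_of_nonneg_left (norm_add_le _ _) (hw.2 x hx).le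
    _ = v x * ‖f x‖ + v x * ‖g x‖ := mul_add _ _ _
    _ ≤ M + N := add_le_add (hM x hx) (hN x hx)

lemma HvBdd.smul' {U : Set E} {v : E → ℝ} {f : E → F} (c : ℂ)
    (hf : HvBdd U v f) : HvBdd U v (fun x => c • f x) := by
  obtain ⟨M, hM⟩ := bddAbove_image_iff'.1 hf.2
  refine ⟨hf.1.const_smul c, bddAbove_image_iff'.2 ⟨‖c‖ * M, fun x hx => ?_⟩⟩
  rw [norm_smul, ← mul_assoc, mul_comm (v x) ‖c‖, mul_assoc]
  exact mul_le_mul_of_nonneg_left (hM x hx) (norm_nonneg c)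

lemma hvBdd_smul_const {U : Set E} {v : E → ℝ} {h : E → ℂ} (hh : HvBdd U v h) (y : F) :
    HvBdd U v (fun x => h x • y) := by
  obtain ⟨M, hM⟩ := bddAbove_image_iff'.1 hh.2
  refine ⟨hh.1.smul_const y, bddAbove_image_iff'.2 ⟨M * ‖y‖, fun x hx => ?_⟩⟩
  rw [norm_smul, ← mul_assoc]
  exact mul_le_mul_of_nonneg_right (hM x hx) (norm_nonneg y)

lemma hvBdd_comp {U V : Set E} {v : E → ℝ} (hw : IsWeight U v) (hVU : V ⊆ U)
    {h : E → E} (hh : DifferentiableOn ℂ h V) (hmap : Set.MapsTo h V U)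
    {c : ℝ} (hc : 0 ≤ c) (hvc : ∀ x ∈ V, v x ≤ c * v (h x))
    (T : F →L[ℂ] G) {f : E → F} (hf : HvBdd U v f) :
    HvBdd V v (fun x => T (f (h x))) := by
  obtain ⟨M, hM⟩ := bddAbove_image_iff'.1 hf.2
  have hM0 : ∀ x ∈ V, v x * ‖f (h x)‖ ≤ c * M := fun x hx => by
    have h1 : v (h x) * ‖f (h x)‖ ≤ M := hM _ (hmap hx)
    have h2 : v x ≤ c * v (h x) := hvc x hx
    nlinarith [mul_le_mul_of_nonneg_right h2 (norm_nonneg (f (h x))),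
      mul_le_mul_of_nonneg_left h1 hc]
  refine ⟨T.differentiable.comp_differentiableOn (hf.1.comp hh hmap),
    bddAbove_image_iff'.2 ⟨‖T‖ * (c * M), fun x hx => ?_⟩⟩
  calc v x * ‖T (f (h x))‖ ≤ v x * (‖T‖ * ‖f (h x)‖) :=
        mul_le_mul_of_nonneg_left (T.le_opNorm _) (hw.2 x (hVU hx)).le
    _ = ‖T‖ * (v x * ‖f (h x)‖) := by ring
    _ ≤ ‖T‖ * (c * M) := mul_le_mul_of_nonneg_left (hM0 x hx) (norm_nonneg T)

end HvBddLemmas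

set_option maxHeartbeats 1000000 in
/-- the injective hull is the smallest injective normed weighted holomorphic
ideal containing `I`. -/
theorem injective_hull_smallest (I : WHAssignment.{u}) (hI : IsNormedWHIdeal I) :
    WHle I (whInj I) ∧ IsNormedWHIdeal (whInj I) ∧ WHInjective (whInj I) ∧
      ∀ J : WHAssignment.{u}, IsNormedWHIdeal J → WHInjective J → WHle I J →
        WHle (whInj I) J := by
  refine ⟨?_, ?_, ?_, ?_⟩
  · -- `I ≤ I^inj`
    intro E U v hU hw F f hf
    have hB : HvBdd U v f := hI.mem_hv E U v hU hw F f hf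
    obtain ⟨h1, h2⟩ := hI.comp_mem E U v hU hw U hU subset_rfl (fun x => x)
      differentiableOn_id (fun x hx => hx) 1 zero_le_one (fun x hx => (one_mul (v x)).symm.le)
      F (LinfSp F.α) (iota F.α) f hf
    refine ⟨⟨hB, h1⟩, ?_⟩
    show I.nrm E U v (LinfSp F.α) (fun x => iota F.α (f x)) ≤ I.nrm E U v F f
    have hn := hI.nrm_nonneg E U v hU hw F f hf
    calc I.nrm E U v (LinfSp F.α) (fun x => iota F.α (f x))
        ≤ ‖iota F.α‖ * I.nrm E U v F f * 1 := h2
      _ ≤ 1 * I.nrm E U v F f * 1 :=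
          mul_le_mul_of_nonneg_right (mul_le_mul_of_nonneg_right norm_iota_le hn) zero_le_one
      _ = I.nrm E U v F f := by ring
  · -- `I^inj` is a normed weighted holomorphic ideal
    constructor
    · intro E U v hU hw F f hf
      exact hf.1
    · intro E U v hU hw F
      refine ⟨hvBdd_zero, ?_⟩
      show I.mem E U v (LinfSp F.α) (fun _ => iota F.α (0 : F.α))
      have h0 : (fun _ : E.α => iota F.α (0 : F.α)) = fun _ : E.α => (0 : Linf F.α) :=
        funext fun _ => map_zero _
      rw [h0]
      exact hI.zero_mem E U v hU hw (LinfSp F.α)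
    · intro E U v hU hw F f g hf hg
      refine ⟨HvBdd.add' hw hf.1 hg.1, ?_⟩
      show I.mem E U v (LinfSp F.α) (fun x => iota F.α (f x + g x))
      have h0 : (fun x => iota F.α (f x + g x)) =
          fun x => iota F.α (f x) + iota F.α (g x) := funext fun x => map_add _ _ _
      rw [h0]
      exact hI.add_mem E U v hU hw (LinfSp F.α) _ _ hf.2 hg.2
    · intro E U v hU hw F c f hf
      refine ⟨HvBdd.smul' c hf.1, ?_⟩
      show I.mem E U v (LinfSp F.α) (fun x => iota F.α (c • f x))
      have h0 : (fun x => iota F.α (c • f x)) = fun x => c • iota F.α (f x) :=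
        funext fun x => map_smul _ _ _
      rw [h0]
      exact hI.smul_mem E U v hU hw (LinfSp F.α) c _ hf.2
    · intro E U v hU hw F f hf
      exact hI.nrm_nonneg E U v hU hw (LinfSp F.α) _ hf.2
    · intro E U v hU hw F f hf h0 x hx
      have h1 := hI.nrm_eq_zero E U v hU hw (LinfSp F.α) _ hf.2 h0 x hx
      have h2 := norm_iota (f x)
      rw [h1] at h2
      replace h2 := norm_zero.symm.trans h2
      exact norm_eq_zero.mp h2.symm
    · intro E U v hU hw F f g hf hg
      show I.nrm E U v (LinfSp F.α) (fun x => iota F.α (f x + g x)) ≤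
        I.nrm E U v (LinfSp F.α) (fun x => iota F.α (f x)) +
          I.nrm E U v (LinfSp F.α) (fun x => iota F.α (g x))
      have h0 : (fun x => iota F.α (f x + g x)) =
          fun x => iota F.α (f x) + iota F.α (g x) := funext fun x => map_add _ _ _
      rw [h0]
      exact hI.nrm_add_le E U v hU hw (LinfSp F.α) _ _ hf.2 hg.2
    · intro E U v hU hw F c f hf
      show I.nrm E U v (LinfSp F.α) (fun x => iota F.α (c • f x)) =
        ‖c‖ * I.nrm E U v (LinfSp F.α) (fun x => iota F.α (f x))
      have h0 : (fun x => iota F.α (c • f x)) = fun x => c • iota F.α (f x) :=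
        funext fun x => map_smul _ _ _
      rw [h0]
      exact hI.nrm_smul E U v hU hw (LinfSp F.α) c _ hf.2
    · intro E U v hU hw F f hf
      show hvNorm U v f ≤ I.nrm E U v (LinfSp F.α) (fun x => iota F.α (f x))
      have heq : (fun x => v x * ‖f x‖) = fun x => v x * ‖iota F.α (f x)‖ :=
        funext fun x => by rw [norm_iota]
      have h1 : hvNorm U v f = hvNorm U v (fun x => iota F.α (f x)) := by
        unfold hvNorm
        rw [heq]
      rw [h1]
      exact hI.hv_le_nrm E U v hU hw (LinfSp F.α) _ hf.2
    · intro E U v hU hw F h hh y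
      obtain ⟨hm, hn⟩ := hI.unit_mem E U v hU hw (LinfSp F.α) h hh (iota F.α y)
      have heq : (fun x => iota F.α (h x • y)) = fun x => h x • iota F.α y :=
        funext fun x => map_smul _ _ _
      constructor
      · refine ⟨hvBdd_smul_const hh y, ?_⟩
        show I.mem E U v (LinfSp F.α) (fun x => iota F.α (h x • y))
        rw [heq]
        exact hm
      · show I.nrm E U v (LinfSp F.α) (fun x => iota F.α (h x • y)) = hvNorm U v h * ‖y‖
        rw [heq]
        exact hn.trans (congrArg _ (norm_iota y))
    · intro E U v hU hw V hV hVU h hh hmap c hc hvc F G T f hf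
      obtain ⟨h1, h2⟩ := hI.comp_mem E U v hU hw V hV hVU h hh hmap c hc hvc
        (LinfSp F.α) (LinfSp G.α) (coordOp ‖T‖ (norm_nonneg T) (pullBall T)) _ hf.2
      have heq : (fun x => coordOp ‖T‖ (norm_nonneg T) (pullBall T) (iota F.α (f (h x)))) =
          fun x => iota G.α (T (f (h x))) := funext fun x => pushOp_iota T (f (h x))
      have h1' : I.mem E V v (LinfSp G.α) (fun x => iota G.α (T (f (h x)))) :=
        (congrArg (I.mem E V v (LinfSp G.α)) heq).mp h1
      have h2' : I.nrm E V v (LinfSp G.α) (fun x => iota G.α (T (f (h x)))) ≤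
          ‖coordOp ‖T‖ (norm_nonneg T) (pullBall T)‖ *
            I.nrm E U v (LinfSp F.α) (fun x => iota F.α (f x)) * c :=
        le_of_eq_of_le (congrArg (I.nrm E V v (LinfSp G.α)) heq).symm h2
      refine ⟨⟨hvBdd_comp hw hVU hh hmap hc hvc T hf.1, h1'⟩, ?_⟩
      show I.nrm E V v (LinfSp G.α) (fun x => iota G.α (T (f (h x)))) ≤
        ‖T‖ * I.nrm E U v (LinfSp F.α) (fun x => iota F.α (f x)) * c
      have hn := hI.nrm_nonneg E U v hU hw (LinfSp F.α) _ hf.2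
      calc I.nrm E V v (LinfSp G.α) (fun x => iota G.α (T (f (h x))))
          ≤ ‖coordOp ‖T‖ (norm_nonneg T) (pullBall T)‖ *
              I.nrm E U v (LinfSp F.α) (fun x => iota F.α (f x)) * c := h2'
        _ ≤ ‖T‖ * I.nrm E U v (LinfSp F.α) (fun x => iota F.α (f x)) * c :=
            mul_le_mul_of_nonneg_right
              (mul_le_mul_of_nonneg_right (coordOp_norm_le _ _ _) hn) hc
  · -- `I^inj` is injective
    intro E U v hU hw F G f hB ι hmem
    obtain ⟨hB2, hmemI⟩ := hmem
    obtain ⟨h1, h2⟩ := hI.comp_mem E U v hU hw U hU subset_rfl (fun x => x)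
      differentiableOn_id (fun x hx => hx) 1 zero_le_one (fun x hx => (one_mul (v x)).symm.le)
      (LinfSp G.α) (LinfSp F.α) (coordOp 1 zero_le_one (extBall ι)) _ hmemI
    have heq : (fun x => coordOp 1 zero_le_one (extBall ι) (iota G.α (ι (f x)))) =
        fun x => iota F.α (f x) := funext fun x => extOp_iota ι (f x)
    have h1' : I.mem E U v (LinfSp F.α) (fun x => iota F.α (f x)) :=
      (congrArg (I.mem E U v (LinfSp F.α)) heq).mp h1
    have h2' : I.nrm E U v (LinfSp F.α) (fun x => iota F.α (f x)) ≤
        ‖coordOp 1 zero_le_one (extBall ι)‖ *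
          I.nrm E U v (LinfSp G.α) (fun x => iota G.α (ι (f x))) * 1 :=
      le_of_eq_of_le (congrArg (I.nrm E U v (LinfSp F.α)) heq).symm h2
    have hnG := hI.nrm_nonneg E U v hU hw (LinfSp G.α) _ hmemI
    have hle1 : I.nrm E U v (LinfSp F.α) (fun x => iota F.α (f x)) ≤
        I.nrm E U v (LinfSp G.α) (fun x => iota G.α (ι (f x))) := by
      calc I.nrm E U v (LinfSp F.α) (fun x => iota F.α (f x))
          ≤ ‖coordOp 1 zero_le_one (extBall ι)‖ *
              I.nrm E U v (LinfSp G.α) (fun x => iota G.α (ι (f x))) * 1 := h2'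
        _ ≤ 1 * I.nrm E U v (LinfSp G.α) (fun x => iota G.α (ι (f x))) * 1 :=
            mul_le_mul_of_nonneg_right
              (mul_le_mul_of_nonneg_right (coordOp_norm_le _ _ _) hnG) zero_le_one
        _ = I.nrm E U v (LinfSp G.α) (fun x => iota G.α (ι (f x))) := by ring
    obtain ⟨h3, h4⟩ := hI.comp_mem E U v hU hw U hU subset_rfl (fun x => x)
      differentiableOn_id (fun x hx => hx) 1 zero_le_one (fun x hx => (one_mul (v x)).symm.le)
      (LinfSp F.α) (LinfSp G.α)
      (coordOp ‖ι.toContinuousLinearMap‖ (norm_nonneg _) (pullBall ι.toContinuousLinearMap)) _ h1'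
    have heq2 : (fun x => coordOp ‖ι.toContinuousLinearMap‖ (norm_nonneg _)
        (pullBall ι.toContinuousLinearMap) (iota F.α (f x))) =
        fun x => iota G.α (ι (f x)) := funext fun x => by
      rw [pushOp_iota ι.toContinuousLinearMap (f x)]
      simp
    have h4' : I.nrm E U v (LinfSp G.α) (fun x => iota G.α (ι (f x))) ≤
        ‖coordOp ‖ι.toContinuousLinearMap‖ (norm_nonneg _)
            (pullBall ι.toContinuousLinearMap)‖ *
          I.nrm E U v (LinfSp F.α) (fun x => iota F.α (f x)) * 1 :=
      le_of_eq_of_le (congrArg (I.nrm E U v (LinfSp G.α)) heq2).symm h4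
    have hι'le : ‖ι.toContinuousLinearMap‖ ≤ 1 :=
      ContinuousLinearMap.opNorm_le_bound _ zero_le_one fun y => by
        simp [ι.norm_map]
    have hnF := hI.nrm_nonneg E U v hU hw (LinfSp F.α) _ h1'
    have hle2 : I.nrm E U v (LinfSp G.α) (fun x => iota G.α (ι (f x))) ≤
        I.nrm E U v (LinfSp F.α) (fun x => iota F.α (f x)) := by
      calc I.nrm E U v (LinfSp G.α) (fun x => iota G.α (ι (f x)))
          ≤ ‖coordOp ‖ι.toContinuousLinearMap‖ (norm_nonneg _)
              (pullBall ι.toContinuousLinearMap)‖ *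
              I.nrm E U v (LinfSp F.α) (fun x => iota F.α (f x)) * 1 := h4'
        _ ≤ 1 * I.nrm E U v (LinfSp F.α) (fun x => iota F.α (f x)) * 1 :=
            mul_le_mul_of_nonneg_right (mul_le_mul_of_nonneg_right
              (le_trans (coordOp_norm_le _ _ _) hι'le) hnF) zero_le_one
        _ = I.nrm E U v (LinfSp F.α) (fun x => iota F.α (f x)) := by ring
    exact ⟨⟨hB, h1'⟩, le_antisymm hle1 hle2⟩
  · -- minimality
    intro J hJ hJinj hIJ E U v hU hw F f hf
    obtain ⟨hB, hmemI⟩ := hf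
    obtain ⟨hmemJ, hnJ⟩ := hIJ E U v hU hw (LinfSp F.α) _ hmemI
    have hmemJ' : J.mem E U v (LinfSp F.α) (fun x => iotaLI (f x)) := hmemJ
    obtain ⟨hfin, heqJ⟩ := hJinj E U v hU hw F (LinfSp F.α) f hB iotaLI hmemJ'
    refine ⟨hfin, ?_⟩
    show J.nrm E U v F f ≤ I.nrm E U v (LinfSp F.α) (fun x => iota F.α (f x))
    rw [heqJ]
    exact hnJ

end
end

section
/- Let A be an operator ideal, let U be an open subset of a complex Banach space E with weight v, and let F be a complex Banach space. Then the component of the composition ideal of the closure of A equals the closure of the component of the composition ideal of A: \bar{A}∘H_v^∞(U,F) equals the closure of A∘H_v^∞(U,F) in the Banach space (H_v^∞(U,F), ‖·‖_v). -/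
open scoped ENNReal
open Set

noncomputable section

universe u v w

/-- An assignment of a class of operators and a "norm" to every pair of Banach spaces. -/
structure OpAssignment : Type (u + 1) where
  mem : ∀ (E F : BanachSp.{u}), (E.α →L[ℂ] F.α) → Prop
  nrm : ∀ (E F : BanachSp.{u}), (E.α →L[ℂ] F.α) → ℝ

/-- `A` is an operator ideal (no norm conditions). -/
structure IsOpIdeal (A : OpAssignment.{u}) : Prop where
  zero_mem : ∀ (E F : BanachSp.{u}), A.mem E F 0
  add_mem : ∀ (E F : BanachSp.{u}) (S T : E.α →L[ℂ] F.α),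
    A.mem E F S → A.mem E F T → A.mem E F (S + T)
  rank_one_mem : ∀ (E F : BanachSp.{u}) (φ : E.α →L[ℂ] ℂ) (y : F.α),
    A.mem E F (φ.smulRight y)
  comp_mem : ∀ (E₀ E F F₀ : BanachSp.{u}) (R : E₀.α →L[ℂ] E.α) (T : E.α →L[ℂ] F.α)
    (S : F.α →L[ℂ] F₀.α), A.mem E F T → A.mem E₀ F₀ ((S.comp T).comp R)

/-- `[A, ‖·‖_A]` is a normed operator ideal in the sense of Pietsch. -/
structure IsNormedOpIdeal (A : OpAssignment.{u}) : Prop where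
  zero_mem : ∀ (E F : BanachSp.{u}), A.mem E F 0
  add_mem : ∀ (E F : BanachSp.{u}) (S T : E.α →L[ℂ] F.α),
    A.mem E F S → A.mem E F T → A.mem E F (S + T)
  smul_mem : ∀ (E F : BanachSp.{u}) (c : ℂ) (T : E.α →L[ℂ] F.α),
    A.mem E F T → A.mem E F (c • T)
  nrm_nonneg : ∀ (E F : BanachSp.{u}) (T : E.α →L[ℂ] F.α), A.mem E F T → 0 ≤ A.nrm E F T
  nrm_add_le : ∀ (E F : BanachSp.{u}) (S T : E.α →L[ℂ] F.α), A.mem E F S → A.mem E F T →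
    A.nrm E F (S + T) ≤ A.nrm E F S + A.nrm E F T
  nrm_smul : ∀ (E F : BanachSp.{u}) (c : ℂ) (T : E.α →L[ℂ] F.α), A.mem E F T →
    A.nrm E F (c • T) = ‖c‖ * A.nrm E F T
  op_le_nrm : ∀ (E F : BanachSp.{u}) (T : E.α →L[ℂ] F.α), A.mem E F T → ‖T‖ ≤ A.nrm E F T
  rank_one_mem : ∀ (E F : BanachSp.{u}) (φ : E.α →L[ℂ] ℂ) (y : F.α),
    A.mem E F (φ.smulRight y) ∧ A.nrm E F (φ.smulRight y) = ‖φ‖ * ‖y‖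
  comp_mem : ∀ (E₀ E F F₀ : BanachSp.{u}) (R : E₀.α →L[ℂ] E.α) (T : E.α →L[ℂ] F.α)
    (S : F.α →L[ℂ] F₀.α), A.mem E F T → A.mem E₀ F₀ ((S.comp T).comp R) ∧
      A.nrm E₀ F₀ ((S.comp T).comp R) ≤ ‖S‖ * A.nrm E F T * ‖R‖

/-- `[A, ‖·‖_A]` is a Banach operator ideal. -/
structure IsBanachOpIdeal (A : OpAssignment.{u}) extends IsNormedOpIdeal A : Prop where
  complete : ∀ (E F : BanachSp.{u}) (T : ℕ → (E.α →L[ℂ] F.α)), (∀ n, A.mem E F (T n)) →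
    (∀ ε : ℝ, 0 < ε → ∃ N : ℕ, ∀ m ≥ N, ∀ n ≥ N, A.nrm E F (T m - T n) < ε) →
    ∃ S, A.mem E F S ∧ ∀ ε : ℝ, 0 < ε → ∃ N : ℕ, ∀ n ≥ N, A.nrm E F (T n - S) < ε

/-- Injectivity of a normed operator ideal. -/
def OpInjective (A : OpAssignment.{u}) : Prop :=
  ∀ (E F G : BanachSp.{u}) (ι : F.α →ₗᵢ[ℂ] G.α) (T : E.α →L[ℂ] F.α),
    A.mem E G (ι.toContinuousLinearMap.comp T) →
      A.mem E F T ∧ A.nrm E F T = A.nrm E G (ι.toContinuousLinearMap.comp T)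

/-- The injective hull `[A^inj, ‖·‖_{A^inj}]` of an operator ideal. -/
def opInj (A : OpAssignment.{u}) : OpAssignment.{u} where
  mem E F T := A.mem E (LinfSp F.α) ((iota F.α).comp T)
  nrm E F T := A.nrm E (LinfSp F.α) ((iota F.α).comp T)

/-- The closure `\bar{A}` of an operator ideal, under the operator norm. -/
def opClosure (A : OpAssignment.{u}) : OpAssignment.{u} where
  mem E F T := ∀ ε : ℝ, 0 < ε → ∃ S, A.mem E F S ∧ ‖T - S‖ ≤ ε
  nrm E F T := ‖T‖

/-- The composition ideal `[A ∘ H_v^∞, ‖·‖_{A ∘ H_v^∞}]`. -/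
def compWH (A : OpAssignment.{u}) : WHAssignment.{u} where
  mem E U v F f := ∃ (G : BanachSp.{u}) (T : G.α →L[ℂ] F.α) (g : E.α → G.α),
    A.mem G F T ∧ HvBdd U v g ∧ ∀ x ∈ U, f x = T (g x)
  nrm E U v F f := sInf {r | ∃ (G : BanachSp.{u}) (T : G.α →L[ℂ] F.α) (g : E.α → G.α),
    A.mem G F T ∧ HvBdd U v g ∧ (∀ x ∈ U, f x = T (g x)) ∧ r = A.nrm G F T * hvNorm U v g}

/-- The closure of a weighted holomorphic ideal in `(H_v^∞, ‖·‖_v)`. -/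
def whClosure (I : WHAssignment.{u}) : WHAssignment.{u} where
  mem E U v F f := HvBdd U v f ∧ ∀ ε : ℝ, 0 < ε → ∃ g : E.α → F.α,
    I.mem E U v F g ∧ ∀ x ∈ U, v x * ‖f x - g x‖ ≤ ε
  nrm E U v F f := hvNorm U v f


/- ===== auxiliary lemmas ===== -/
section Aux
open Metric Set Complex Asymptotics

variable {𝔼 : Type*} [NormedAddCommGroup 𝔼] [NormedSpace ℂ 𝔼]

lemma my_le_inv {a b : ℝ} (hb : 0 < b) (h : b * a ≤ 1) : a ≤ b⁻¹ := by
  rw [← one_div, le_div_iff₀ hb]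
  nlinarith [h]

section W1
variable {W : Type*} [NormedAddCommGroup W] [NormedSpace ℂ W] [CompleteSpace W]

/-- Quantitative Taylor estimate for a bounded holomorphic function on a ball in a
complex Banach space. -/
lemma my_taylor_est {q : 𝔼 → W} {x₀ : 𝔼} {r M : ℝ} (hr : 0 < r)
    (hd : DifferentiableOn ℂ q (ball x₀ r)) (hb : ∀ x ∈ ball x₀ r, ‖q x‖ ≤ M)
    {u : 𝔼} (hu : ‖u‖ ≤ r / 4) :
    ‖q (x₀ + u) - q x₀ - fderiv ℂ q x₀ u‖ ≤ 8 * M / r ^ 2 * ‖u‖ ^ 2 ∧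
      ‖fderiv ℂ q x₀ u‖ ≤ 2 * M / r * ‖u‖ := by
  have hM : 0 ≤ M := le_trans (norm_nonneg _) (hb x₀ (mem_ball_self hr))
  have hqx₀ : DifferentiableAt ℂ q x₀ := hd.differentiableAt (isOpen_ball.mem_nhds (mem_ball_self hr))
  rcases eq_or_ne u 0 with rfl | hu0
  · simp [hM]
  have hρ : 0 < ‖u‖ := norm_pos_iff.2 hu0
  have hr0 : r ≠ 0 := hr.ne'
  have hρ0 : ‖u‖ ≠ 0 := hρ.ne'
  set R : ℝ := r / (2 * ‖u‖) with hRdef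
  have hRpos : 0 < R := div_pos hr (by positivity)
  have hR2 : 2 ≤ R := by
    rw [hRdef, le_div_iff₀ (by positivity)]
    linarith
  set RN : NNReal := ⟨R, hRpos.le⟩ with hRN
  have hRNR : (RN : ℝ) = R := rfl
  set φ : ℂ → W := fun z => q (x₀ + z • u) with hφ
  have hmap : ∀ z : ℂ, ‖z‖ ≤ R → x₀ + z • u ∈ ball x₀ r := by
    intro z hz
    rw [mem_ball, dist_eq_norm]
    have : ‖x₀ + z • u - x₀‖ = ‖z‖ * ‖u‖ := by rw [add_sub_cancel_left, norm_smul]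
    rw [this]
    calc ‖z‖ * ‖u‖ ≤ R * ‖u‖ := by nlinarith
      _ = r / 2 := by rw [hRdef]; field_simp
      _ < r := by linarith
  have hpath : ∀ z : ℂ, DifferentiableAt ℂ (fun w : ℂ => x₀ + w • u) z := by
    intro z
    exact (differentiableAt_id.smul_const u).const_add x₀
  have hφd : DifferentiableOn ℂ φ (closedBall 0 (RN : ℝ)) := by
    intro z hz
    have hz' : ‖z‖ ≤ R := by simpa [dist_eq_norm, hRNR] using hz
    exact ((hd.differentiableAt (isOpen_ball.mem_nhds (hmap z hz'))).comp z (hpath z)).differentiableWithinAt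
  have hp : HasFPowerSeriesOnBall φ (cauchyPowerSeries φ 0 RN) 0 RN :=
    hφd.hasFPowerSeriesOnBall hRpos
  set a : ℕ → W := fun n => cauchyPowerSeries φ 0 (RN : ℝ) n fun _ => (1 : ℂ) with ha
  -- coefficient bounds
  have hφb : ∀ z : ℂ, ‖z‖ ≤ R → ‖φ z‖ ≤ M := fun z hz => hb _ (hmap z hz)
  have hcont : Continuous fun θ : ℝ => ‖φ (circleMap 0 R θ)‖ := by
    have h1 : ContinuousOn φ (closedBall 0 (RN : ℝ)) := hφd.continuousOn
    have h2 : Continuous fun θ : ℝ => circleMap 0 R θ := continuous_circleMap 0 R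
    exact (h1.comp_continuous h2 (fun θ => sphere_subset_closedBall
      (circleMap_mem_sphere 0 hRpos.le θ))).norm
  have hint : (∫ θ : ℝ in (0)..2 * Real.pi, ‖φ (circleMap 0 R θ)‖) ≤ 2 * Real.pi * M := by
    have := intervalIntegral.integral_mono_on (a := 0) (b := 2 * Real.pi)
      (μ := MeasureTheory.volume) Real.two_pi_pos.le
      (hcont.intervalIntegrable _ _) (intervalIntegrable_const)
      (fun θ _ => hφb _ (by
        have := circleMap_mem_sphere (0:ℂ) hRpos.le θ
        simpa [mem_sphere_iff_norm] using this.le))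
    simpa [mul_comm] using this
  have hcoeff : ∀ n : ℕ, ‖a n‖ ≤ M / R ^ n := by
    intro n
    have h1 : ‖cauchyPowerSeries φ 0 R n‖ ≤
        ((2 * Real.pi)⁻¹ * ∫ θ : ℝ in (0)..2 * Real.pi, ‖φ (circleMap 0 R θ)‖) * |R|⁻¹ ^ n :=
      norm_cauchyPowerSeries_le φ 0 R n
    have h2 : ((2 * Real.pi)⁻¹ * ∫ θ : ℝ in (0)..2 * Real.pi, ‖φ (circleMap 0 R θ)‖) ≤ M := by
      rw [inv_mul_le_iff₀ Real.two_pi_pos]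
      linarith [hint]
    have h3 : ‖a n‖ ≤ ‖cauchyPowerSeries φ 0 R n‖ := by
      have h3' := (cauchyPowerSeries φ 0 R n).le_opNorm (fun _ => (1:ℂ))
      calc ‖a n‖ = ‖(cauchyPowerSeries φ 0 R n) (fun _ => (1:ℂ))‖ := rfl
        _ ≤ ‖cauchyPowerSeries φ 0 R n‖ * ∏ _i : Fin n, ‖(1:ℂ)‖ := h3'
        _ = ‖cauchyPowerSeries φ 0 R n‖ := by simp
    have habs : |R| = R := abs_of_pos hRpos
    calc ‖a n‖ ≤ ((2 * Real.pi)⁻¹ * ∫ θ : ℝ in (0)..2 * Real.pi, ‖φ (circleMap 0 R θ)‖) * |R|⁻¹ ^ n :=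
          h3.trans h1
      _ ≤ M * |R|⁻¹ ^ n := by
          apply mul_le_mul_of_nonneg_right h2
          positivity
      _ = M / R ^ n := by rw [habs, inv_pow]; ring
  -- the sum
  have hmem1 : (1 : ℂ) ∈ Metric.eball (0 : ℂ) RN := by
    rw [Metric.mem_eball, edist_eq_enorm_sub, sub_zero]
    rw [show ‖(1:ℂ)‖ₑ = 1 by simp]
    exact_mod_cast lt_of_lt_of_le one_lt_two (by exact_mod_cast hR2)
  have hsum : HasSum a (φ (0 + 1)) := hp.hasSum hmem1
  have ha0 : a 0 = q x₀ := by
    have := hp.coeff_zero (fun _ => (1:ℂ))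
    rw [ha]
    simp only [this]
    simp [hφ]
  have ha1 : a 1 = fderiv ℂ q x₀ u := by
    have hder1 : HasDerivAt φ (fderiv ℂ q x₀ u) 0 := by
      have hpath' : HasDerivAt (fun z : ℂ => x₀ + z • u) u 0 := by
        simpa using ((hasDerivAt_id (0:ℂ)).smul_const u).const_add x₀
      have hq' : HasFDerivAt q (fderiv ℂ q x₀) ((fun z : ℂ => x₀ + z • u) 0) := by
        simpa using hqx₀.hasFDerivAt
      simpa [hφ, Function.comp_def] using hq'.comp_hasDerivAt 0 hpath'
    have hder2 : HasDerivAt φ (a 1) 0 := by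
      have h := hp.hasFPowerSeriesAt.hasFDerivAt
      have h2 := h.hasDerivAt
      have heqf : (Fin.snoc 0 (1:ℂ) : Fin 1 → ℂ) = fun _ => (1:ℂ) := by
        funext i; simp [Fin.snoc]
      have : (continuousMultilinearCurryFin1 ℂ ℂ W (cauchyPowerSeries φ 0 (RN:ℝ) 1)) 1 = a 1 := by
        rw [continuousMultilinearCurryFin1_apply, ha, heqf]
      rwa [this] at h2
    exact hder2.unique hder1
  have hsum2 : HasSum (fun n => a (n + 2)) (φ (0 + 1) - ∑ i ∈ Finset.range 2, a i) :=
    (hasSum_nat_add_iff' 2).2 hsum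
  have hrng : ∑ i ∈ Finset.range 2, a i = q x₀ + fderiv ℂ q x₀ u := by
    rw [Finset.sum_range_succ, Finset.sum_range_one, ha0, ha1]
  have hφ1 : φ (0 + 1) = q (x₀ + u) := by simp [hφ]
  have htail : q (x₀ + u) - q x₀ - fderiv ℂ q x₀ u = ∑' n, a (n + 2) := by
    rw [hsum2.tsum_eq, hφ1, hrng]
    abel
  -- geometric bound
  have hbnd : ∀ n : ℕ, ‖a (n + 2)‖ ≤ M / R ^ 2 * (R⁻¹) ^ n := by
    intro n
    calc ‖a (n + 2)‖ ≤ M / R ^ (n + 2) := hcoeff (n + 2)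
      _ = M / R ^ 2 * (R⁻¹) ^ n := by
          rw [pow_add, inv_pow, div_mul_eq_div_div_swap, div_eq_mul_inv]
  have hgs : Summable fun n : ℕ => (R⁻¹) ^ n :=
    summable_geometric_of_lt_one (by positivity) (by rw [inv_lt_one_iff₀]; right; linarith)
  have hgeo : Summable (fun n : ℕ => M / R ^ 2 * (R⁻¹) ^ n) := hgs.mul_left _
  have hsummable : Summable fun n => ‖a (n + 2)‖ :=
    Summable.of_nonneg_of_le (fun n => norm_nonneg _) hbnd hgeo
  have htsumbd : ‖∑' n, a (n + 2)‖ ≤ M / R ^ 2 * (1 - R⁻¹)⁻¹ := by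
    calc ‖∑' n, a (n + 2)‖ ≤ ∑' n, ‖a (n + 2)‖ := norm_tsum_le_tsum_norm hsummable
      _ ≤ ∑' n : ℕ, M / R ^ 2 * (R⁻¹) ^ n := Summable.tsum_le_tsum hbnd hsummable hgeo
      _ = M / R ^ 2 * (1 - R⁻¹)⁻¹ := by
          rw [tsum_mul_left, tsum_geometric_of_lt_one (by positivity) (by
            rw [inv_lt_one_iff₀]; right; linarith)]
  have hRinv : (1 - R⁻¹)⁻¹ ≤ 2 := by
    have h1 : R⁻¹ ≤ 1/2 := by
      rw [inv_le_iff_one_le_mul₀ hRpos]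
      linarith
    have h2 : (1:ℝ)/2 ≤ 1 - R⁻¹ := by linarith
    calc (1 - R⁻¹)⁻¹ ≤ (1/2 : ℝ)⁻¹ := by
          apply inv_anti₀ (by norm_num) h2
      _ = 2 := by norm_num
  constructor
  · rw [htail]
    calc ‖∑' n, a (n + 2)‖ ≤ M / R ^ 2 * (1 - R⁻¹)⁻¹ := htsumbd
      _ ≤ M / R ^ 2 * 2 := by
          apply mul_le_mul_of_nonneg_left hRinv (by positivity)
      _ = 8 * M / r ^ 2 * ‖u‖ ^ 2 := by
          rw [hRdef]
          rw [div_pow]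
          field_simp
          ring
  · rw [← ha1]
    calc ‖a 1‖ ≤ M / R ^ 1 := hcoeff 1
      _ = 2 * M / r * ‖u‖ := by
          rw [hRdef, pow_one]
          field_simp

/-- Cauchy estimate for the derivative, all directions. -/
lemma my_cauchy_der {q : 𝔼 → W} {x₀ : 𝔼} {r M : ℝ} (hr : 0 < r)
    (hd : DifferentiableOn ℂ q (ball x₀ r)) (hb : ∀ x ∈ ball x₀ r, ‖q x‖ ≤ M)
    (u : 𝔼) : ‖fderiv ℂ q x₀ u‖ ≤ 2 * M / r * ‖u‖ := by
  rcases eq_or_ne u 0 with rfl | hu0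
  · simp
  have hρ : 0 < ‖u‖ := norm_pos_iff.2 hu0
  set t : ℝ := r / (4 * ‖u‖) with ht
  have htpos : 0 < t := div_pos hr (by positivity)
  have hw : ‖((t:ℂ)) • u‖ = r / 4 := by
    rw [norm_smul, Complex.norm_real, Real.norm_eq_abs, abs_of_pos htpos, ht]
    field_simp
  have h1 := (my_taylor_est hr hd hb (u := ((t:ℂ)) • u) (le_of_eq hw)).2
  rw [map_smul, norm_smul, Complex.norm_real, Real.norm_eq_abs, abs_of_pos htpos, hw] at h1
  have h2 : ‖fderiv ℂ q x₀ u‖ ≤ 2 * M / r * (r / 4) / t := by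
    rw [le_div_iff₀ htpos]
    linarith [h1]
  have hr0 : r ≠ 0 := hr.ne'
  have hρ0 : ‖u‖ ≠ 0 := hρ.ne'
  calc ‖fderiv ℂ q x₀ u‖ ≤ 2 * M / r * (r / 4) / t := h2
    _ = 2 * M / r * ‖u‖ := by rw [ht]; field_simp

end W1

/-- A uniformly bounded family of holomorphic functions on a ball gives a holomorphic
`ℓ∞`-valued function. -/
lemma my_lp_diffAt {ι : Type*} {W : ι → Type*} [∀ i, NormedAddCommGroup (W i)]
    [∀ i, NormedSpace ℂ (W i)] [∀ i, CompleteSpace (W i)]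
    (q : ∀ i, 𝔼 → W i) (Q : 𝔼 → lp W ∞) {x₀ : 𝔼} {r M : ℝ} (hr : 0 < r) (hM : 0 ≤ M)
    (hd : ∀ i, DifferentiableOn ℂ (q i) (ball x₀ r))
    (hb : ∀ i, ∀ x ∈ ball x₀ r, ‖q i x‖ ≤ M)
    (hQ : ∀ x ∈ ball x₀ r, ∀ i, (Q x : ∀ i, W i) i = q i x) :
    DifferentiableAt ℂ Q x₀ := by
  have hder : ∀ u i, ‖fderiv ℂ (q i) x₀ u‖ ≤ 2 * M / r * ‖u‖ := fun u i =>
    my_cauchy_der hr (hd i) (hb i) u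
  have hmem : ∀ u : 𝔼, Memℓp (fun i => fderiv ℂ (q i) x₀ u) ∞ :=
    fun u => memℓp_infty ⟨2 * M / r * ‖u‖, by rintro s ⟨i, rfl⟩; exact hder u i⟩
  set Dlin : 𝔼 →ₗ[ℂ] lp W ∞ :=
    { toFun := fun u => ⟨fun i => fderiv ℂ (q i) x₀ u, hmem u⟩
      map_add' := by
        intro a b
        apply lp.ext
        rw [lp.coeFn_add]
        funext i
        exact map_add (fderiv ℂ (q i) x₀) a b
      map_smul' := by
        intro c a
        apply lp.ext
        rw [lp.coeFn_smul]
        funext i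
        exact map_smul (fderiv ℂ (q i) x₀) c a } with hDlin
  set D : 𝔼 →L[ℂ] lp W ∞ := Dlin.mkContinuous (2 * M / r) (fun u => by
    apply lp.norm_le_of_forall_le (by positivity)
    intro i
    exact hder u i) with hD
  have hfd : HasFDerivAt Q D x₀ := by
    rw [hasFDerivAt_iff_isLittleO_nhds_zero]
    rw [Asymptotics.isLittleO_iff]
    intro c hc
    have hδ : 0 < min (r / 4) (c * r ^ 2 / (8 * M + 1)) := by positivity
    filter_upwards [Metric.ball_mem_nhds (0 : 𝔼) hδ] with u hu
    rw [mem_ball, dist_zero_right] at hu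
    have hu4 : ‖u‖ ≤ r / 4 := le_of_lt (lt_of_lt_of_le hu (min_le_left _ _))
    have huc : ‖u‖ ≤ c * r ^ 2 / (8 * M + 1) := le_of_lt (lt_of_lt_of_le hu (min_le_right _ _))
    have hxu : x₀ + u ∈ ball x₀ r := by
      rw [mem_ball, dist_eq_norm, add_sub_cancel_left]
      calc ‖u‖ ≤ r / 4 := hu4
        _ < r := by linarith
    have hx₀ : x₀ ∈ ball x₀ r := mem_ball_self hr
    have key : ‖Q (x₀ + u) - Q x₀ - D u‖ ≤ 8 * M / r ^ 2 * ‖u‖ ^ 2 := by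
      apply lp.norm_le_of_forall_le (by positivity)
      intro i
      have hco : (↑(Q (x₀ + u) - Q x₀ - D u) : ∀ i, W i) i
          = q i (x₀ + u) - q i x₀ - fderiv ℂ (q i) x₀ u := by
        rw [lp.coeFn_sub, lp.coeFn_sub]
        simp only [Pi.sub_apply]
        rw [hQ _ hxu, hQ _ hx₀]
        rfl
      rw [hco]
      exact (my_taylor_est hr (hd i) (hb i) hu4).1
    calc ‖Q (x₀ + u) - Q x₀ - D u‖ ≤ 8 * M / r ^ 2 * ‖u‖ ^ 2 := key
      _ = (8 * M / r ^ 2 * ‖u‖) * ‖u‖ := by ring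
      _ ≤ c * ‖u‖ := by
          apply mul_le_mul_of_nonneg_right _ (norm_nonneg u)
          calc 8 * M / r ^ 2 * ‖u‖ ≤ 8 * M / r ^ 2 * (c * r ^ 2 / (8 * M + 1)) := by
                apply mul_le_mul_of_nonneg_left huc (by positivity)
            _ = c * (8 * M / (8 * M + 1)) := by field_simp
            _ ≤ c * 1 := by
                apply mul_le_mul_of_nonneg_left _ hc.le
                rw [div_le_one (by positivity)]
                linarith
            _ = c := mul_one c
      _ = c * ‖id u‖ := by rw [id]
  exact hfd.differentiableAt

section CodRestrict
variable {P : Type*} [NormedAddCommGroup P] [NormedSpace ℂ P]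

/-- If a holomorphic map takes values in a closed submodule, then its corestriction
is holomorphic. -/
lemma my_codRestrict_diffOn (G : Submodule ℂ P) (hGc : IsClosed (G : Set P))
    {g : 𝔼 → P} {U : Set 𝔼} (hU : IsOpen U) (hd : ∀ x ∈ U, DifferentiableAt ℂ g x)
    (hmem : ∀ x ∈ U, g x ∈ G) (gbar : 𝔼 → G) (hgg : ∀ x ∈ U, (gbar x : P) = g x) :
    DifferentiableOn ℂ gbar U := by
  intro x₀ hx₀
  have hgx₀ : HasFDerivAt g (fderiv ℂ g x₀) x₀ := (hd x₀ hx₀).hasFDerivAt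
  set D := fderiv ℂ g x₀ with hDdef
  have hmemD : ∀ u : 𝔼, D u ∈ G := by
    intro u
    have hpath : HasDerivAt (fun t : ℂ => g (x₀ + t • u)) (D u) 0 := by
      have hp : HasDerivAt (fun t : ℂ => x₀ + t • u) u 0 := by
        simpa using ((hasDerivAt_id (0:ℂ)).smul_const u).const_add x₀
      have hq : HasFDerivAt g D ((fun t : ℂ => x₀ + t • u) 0) := by simpa using hgx₀
      simpa [Function.comp_def] using hq.comp_hasDerivAt 0 hp
    rw [hasDerivAt_iff_tendsto_slope] at hpath
    have hev : ∀ᶠ t in nhdsWithin (0:ℂ) {(0:ℂ)}ᶜ, slope (fun t : ℂ => g (x₀ + t • u)) 0 t ∈ G := by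
      have hcont : Continuous (fun t : ℂ => x₀ + t • u) := by continuity
      have hU' : (fun t : ℂ => x₀ + t • u) ⁻¹' U ∈ nhds (0:ℂ) := by
        apply hcont.continuousAt.preimage_mem_nhds
        apply hU.mem_nhds
        simpa using hx₀
      apply Filter.eventually_iff_exists_mem.2
      exact ⟨_, nhdsWithin_le_nhds hU', fun t ht => by
        have h1 : x₀ + t • u ∈ U := ht
        have h2 : g (x₀ + t • u) - g (x₀ + (0:ℂ) • u) ∈ G := by
          apply sub_mem (hmem _ h1)
          apply hmem
          simpa using hx₀
        have : slope (fun t : ℂ => g (x₀ + t • u)) 0 t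
            = (t - 0)⁻¹ • (g (x₀ + t • u) - g (x₀ + (0:ℂ) • u)) := by
          rw [slope_def_module]
        rw [this]
        exact G.smul_mem _ h2⟩
    exact hGc.mem_of_tendsto hpath hev
  set D' : 𝔼 →L[ℂ] G := D.codRestrict G hmemD with hD'
  have hfd : HasFDerivAt gbar D' x₀ := by
    rw [hasFDerivAt_iff_isLittleO_nhds_zero]
    have hg' : (fun u => g (x₀ + u) - g x₀ - D u) =o[nhds 0] (fun u : 𝔼 => u) := by
      rw [← hasFDerivAt_iff_isLittleO_nhds_zero]
      exact hgx₀
    rw [← isLittleO_norm_left]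
    rw [← isLittleO_norm_left] at hg'
    apply hg'.congr' _ Filter.EventuallyEq.rfl
    have hUnb : {u : 𝔼 | x₀ + u ∈ U} ∈ nhds (0:𝔼) := by
      have : Continuous (fun u : 𝔼 => x₀ + u) := by continuity
      apply this.continuousAt.preimage_mem_nhds
      apply hU.mem_nhds
      simpa using hx₀
    filter_upwards [hUnb] with u hu
    have h1 : (↑(gbar (x₀ + u) - gbar x₀ - D' u) : P) = g (x₀ + u) - g x₀ - D u := by
      push_cast
      rw [hgg _ hu, hgg _ hx₀]
      rfl
    rw [← Submodule.norm_coe (gbar (x₀ + u) - gbar x₀ - D' u)]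
    rw [h1]
  exact hfd.differentiableAt.differentiableWithinAt

end CodRestrict

/-- Coordinate projection on `ℓ∞` as a continuous linear map. -/
def myLpProj {ι : Type*} (W : ι → Type*) [∀ i, NormedAddCommGroup (W i)]
    [∀ i, NormedSpace ℂ (W i)] (i : ι) : lp W ∞ →L[ℂ] W i :=
  LinearMap.mkContinuous
    { toFun := fun ξ => ξ i
      map_add' := fun a b => by
        show (↑(a + b) : ∀ j, W j) i = (↑a : ∀ j, W j) i + (↑b : ∀ j, W j) i
        rw [lp.coeFn_add]; rfl
      map_smul' := fun c a => by
        show (↑(c • a) : ∀ j, W j) i = c • (↑a : ∀ j, W j) i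
        rw [lp.coeFn_smul]; rfl }
    1 (fun ξ => by
      rw [one_mul]
      exact lp.norm_apply_le_norm ENNReal.top_ne_zero ξ i)

@[simp] lemma myLpProj_apply {ι : Type*} (W : ι → Type*) [∀ i, NormedAddCommGroup (W i)]
    [∀ i, NormedSpace ℂ (W i)] (i : ι) (ξ : lp W ∞) : myLpProj W i ξ = ξ i := rfl

end Aux

set_option maxHeartbeats 1000000 in
theorem comp_closure_eq_closure_comp (A : OpAssignment.{u}) (hA : IsOpIdeal A)
    (E : BanachSp.{u}) (U : Set E.α) (v : E.α → ℝ) (hU : IsOpen U) (hv : IsWeight U v)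
    (F : BanachSp.{u}) :
    ∀ f : E.α → F.α,
      (compWH (opClosure A)).mem E U v F f ↔ (whClosure (compWH A)).mem E U v F f := by
  intro f
  constructor
  · -- easy direction
    rintro ⟨G, T, g, hT, hg, heq⟩
    obtain ⟨Mg, hMg⟩ := hg.2
    have hMg' : ∀ x ∈ U, v x * ‖g x‖ ≤ Mg := fun x hx => hMg ⟨x, hx, rfl⟩
    set M : ℝ := max Mg 0 with hM
    have hM0 : 0 ≤ M := le_max_right _ _
    have hMg'' : ∀ x ∈ U, v x * ‖g x‖ ≤ M := fun x hx => (hMg' x hx).trans (le_max_left _ _)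
    constructor
    · constructor
      · exact (T.differentiable.comp_differentiableOn hg.1).congr heq
      · refine ⟨‖T‖ * M, ?_⟩
        rintro y ⟨x, hx, rfl⟩
        have hvx : 0 ≤ v x := (hv.2 x hx).le
        calc v x * ‖f x‖ = v x * ‖T (g x)‖ := by rw [heq x hx]
          _ ≤ v x * (‖T‖ * ‖g x‖) := mul_le_mul_of_nonneg_left (T.le_opNorm _) hvx
          _ = ‖T‖ * (v x * ‖g x‖) := by ring
          _ ≤ ‖T‖ * M := mul_le_mul_of_nonneg_left (hMg'' x hx) (norm_nonneg T)
    · intro ε hε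
      have hδ : 0 < ε / (M + 1) := by positivity
      obtain ⟨S, hS, hTS⟩ := hT (ε / (M + 1)) hδ
      refine ⟨fun x => S (g x), ⟨G, S, g, hS, hg, fun x _ => rfl⟩, ?_⟩
      intro x hx
      have hvx : 0 ≤ v x := (hv.2 x hx).le
      calc v x * ‖f x - S (g x)‖ = v x * ‖(T - S) (g x)‖ := by
            rw [heq x hx, ContinuousLinearMap.sub_apply]
        _ ≤ v x * (‖T - S‖ * ‖g x‖) := mul_le_mul_of_nonneg_left ((T - S).le_opNorm _) hvx
        _ = ‖T - S‖ * (v x * ‖g x‖) := by ring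
        _ ≤ (ε / (M + 1)) * M :=
            mul_le_mul hTS (hMg'' x hx) (mul_nonneg hvx (norm_nonneg _)) hδ.le
        _ ≤ (ε / (M + 1)) * (M + 1) := by nlinarith
        _ = ε := by field_simp
  · -- hard direction
    rintro ⟨hf, happ⟩
    classical
    -- choose approximating factorizations
    have hchoice : ∀ n : ℕ, ∃ (G : BanachSp.{u}) (T : G.α →L[ℂ] F.α) (g : E.α → G.α),
        A.mem G F T ∧ HvBdd U v g ∧ ∀ x ∈ U, v x * ‖f x - T (g x)‖ ≤ 1 / (n + 1) := by
      intro n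
      obtain ⟨g₀, ⟨G, T, g, hT, hg, heq⟩, hap⟩ := happ (1 / (n + 1)) (by positivity)
      exact ⟨G, T, g, hT, hg, fun x hx => by
        have := hap x hx
        rwa [heq x hx] at this⟩
    choose Gs Ts gs hTs hgs hap using hchoice
    obtain ⟨Mf, hMf⟩ := hf.2
    have hMf' : ∀ x ∈ U, v x * ‖f x‖ ≤ Mf := fun x hx => hMf ⟨x, hx, rfl⟩
    have hMgex : ∀ n : ℕ, ∃ Mn : ℝ, ∀ x ∈ U, v x * ‖gs n x‖ ≤ Mn := by
      intro n
      obtain ⟨Mn, h⟩ := (hgs n).2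
      exact ⟨Mn, fun x hx => h ⟨x, hx, rfl⟩⟩
    choose Mg hMgs using hMgex
    set cn : ℕ → ℝ := fun n => (max (Mg n) 0 + 1)⁻¹ with hcn
    have hcpos : ∀ n, 0 < cn n := by
      intro n
      have : (0:ℝ) ≤ max (Mg n) 0 := le_max_right _ _
      rw [hcn]
      positivity
    have hgb : ∀ n, ∀ x ∈ U, v x * (cn n * ‖gs n x‖) ≤ 1 := by
      intro n x hx
      have h1 : v x * ‖gs n x‖ ≤ max (Mg n) 0 := le_trans (hMgs n x hx) (le_max_left _ _)
      have h2 : (0:ℝ) < max (Mg n) 0 + 1 := by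
        have : (0:ℝ) ≤ max (Mg n) 0 := le_max_right _ _
        linarith
      have h3 : v x * (cn n * ‖gs n x‖) = (v x * ‖gs n x‖) * (max (Mg n) 0 + 1)⁻¹ := by
        rw [hcn]; ring
      rw [h3]
      calc (v x * ‖gs n x‖) * (max (Mg n) 0 + 1)⁻¹
          ≤ (max (Mg n) 0 + 1) * (max (Mg n) 0 + 1)⁻¹ := by
            apply mul_le_mul_of_nonneg_right _ (inv_nonneg.2 h2.le)
            linarith
        _ = 1 := mul_inv_cancel₀ h2.ne'
    -- the index type of uniformly bounded holomorphic functions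
    let BH : Type u := {h : E.α → ℂ // DifferentiableOn ℂ h U ∧ (∀ x ∈ U, v x * ‖h x‖ ≤ 1) ∧
      ∀ x ∉ U, h x = 0}
    let L1 : Type u := lp (fun _ : BH => ℂ) ∞
    let L2 : Type u := lp (fun n : ℕ => (Gs n).α) ∞
    let Ps : Type u := F.α × L1 × L2
    -- the universal map
    have hmem1 : ∀ x : E.α, Memℓp (fun h : BH => h.1 x) ∞ := by
      intro x
      apply memℓp_infty
      refine ⟨if x ∈ U then (v x)⁻¹ else 0, ?_⟩
      rintro s ⟨h, rfl⟩
      dsimp only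
      by_cases hx : x ∈ U
      · rw [if_pos hx]
        exact my_le_inv (hv.2 x hx) (h.2.2.1 x hx)
      · rw [if_neg hx, h.2.2.2 x hx]
        simp
    have hmem2 : ∀ x : E.α, Memℓp (fun n : ℕ => ((cn n : ℝ) : ℂ) • Set.indicator U (gs n) x) ∞ := by
      intro x
      apply memℓp_infty
      refine ⟨if x ∈ U then (v x)⁻¹ else 0, ?_⟩
      rintro s ⟨n, rfl⟩
      dsimp only
      by_cases hx : x ∈ U
      · rw [if_pos hx, Set.indicator_of_mem hx]
        rw [norm_smul, Complex.norm_real, Real.norm_eq_abs, abs_of_pos (hcpos n)]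
        exact my_le_inv (hv.2 x hx) (hgb n x hx)
      · rw [if_neg hx, Set.indicator_of_notMem hx]
        simp
    let gg : E.α → Ps := fun x =>
      (Set.indicator U f x, ⟨fun h : BH => h.1 x, hmem1 x⟩,
        ⟨fun n : ℕ => ((cn n : ℝ) : ℂ) • Set.indicator U (gs n) x, hmem2 x⟩)
    -- gg is holomorphic on U
    have hggdiff : ∀ x₀ ∈ U, DifferentiableAt ℂ gg x₀ := by
      intro x₀ hx₀
      have hv₀ : 0 < v x₀ := hv.2 x₀ hx₀
      set m : ℝ := v x₀ / 2 with hm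
      have hmpos : 0 < m := by rw [hm]; positivity
      have hcont : ContinuousAt v x₀ := (hv.1).continuousAt (hU.mem_nhds hx₀)
      have hev : {x | m < v x} ∈ nhds x₀ := hcont (Ioi_mem_nhds (by rw [hm]; linarith))
      have hUm : U ∩ {x | m < v x} ∈ nhds x₀ := Filter.inter_mem (hU.mem_nhds hx₀) hev
      obtain ⟨r, hrpos, hball⟩ := Metric.mem_nhds_iff.1 hUm
      have hbU : Metric.ball x₀ r ⊆ U := fun y hy => (hball hy).1
      have hbm : ∀ y ∈ Metric.ball x₀ r, m < v y := fun y hy => (hball hy).2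
      have hbm' : ∀ y ∈ Metric.ball x₀ r, (v y)⁻¹ ≤ m⁻¹ := fun y hy =>
        inv_anti₀ hmpos (hbm y hy).le
      have hMnn : (0:ℝ) ≤ m⁻¹ := (inv_pos.2 hmpos).le
      have hd1 : DifferentiableAt ℂ (fun x => Set.indicator U f x) x₀ := by
        have : DifferentiableOn ℂ (Set.indicator U f) U :=
          hf.1.congr (fun x hx => Set.indicator_of_mem hx f)
        exact this.differentiableAt (hU.mem_nhds hx₀)
      have hd2 : DifferentiableAt ℂ (fun x => (⟨fun h : BH => h.1 x, hmem1 x⟩ : L1)) x₀ := by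
        apply my_lp_diffAt (fun (h : BH) (x : E.α) => h.1 x) _ hrpos hMnn
        · exact fun h => h.2.1.mono hbU
        · intro h x hx
          exact (my_le_inv (hv.2 x (hbU hx)) (h.2.2.1 x (hbU hx))).trans (hbm' x hx)
        · intro x _ h
          rfl
      have hd3 : DifferentiableAt ℂ
          (fun x => (⟨fun n : ℕ => ((cn n : ℝ) : ℂ) • Set.indicator U (gs n) x, hmem2 x⟩ : L2)) x₀ := by
        apply my_lp_diffAt
          (fun (n : ℕ) (x : E.α) => ((cn n : ℝ) : ℂ) • Set.indicator U (gs n) x) _ hrpos hMnn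
        · intro n
          have h1 : DifferentiableOn ℂ (Set.indicator U (gs n)) (Metric.ball x₀ r) :=
            ((hgs n).1.mono hbU).congr (fun x hx => Set.indicator_of_mem (hbU hx) (gs n))
          exact h1.const_smul _
        · intro n x hx
          rw [Set.indicator_of_mem (hbU hx), norm_smul, Complex.norm_real, Real.norm_eq_abs,
            abs_of_pos (hcpos n)]
          exact (my_le_inv (hv.2 x (hbU hx)) (hgb n x (hbU hx))).trans (hbm' x hx)
        · intro x _ n
          rfl
      exact hd1.prodMk (hd2.prodMk hd3)
    -- the closed subspace generated by the image
    let Gsub : Submodule ℂ Ps := (Submodule.span ℂ (gg '' U)).topologicalClosure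
    have hGclosed : IsClosed (Gsub : Set Ps) := Submodule.isClosed_topologicalClosure _
    haveI : CompleteSpace Gsub := hGclosed.completeSpace_coe
    have hmemgg : ∀ x ∈ U, gg x ∈ Gsub := fun x hx =>
      Submodule.le_topologicalClosure _ (Submodule.subset_span ⟨x, hx, rfl⟩)
    let ggbar : E.α → Gsub := fun x => if hx : x ∈ U then ⟨gg x, hmemgg x hx⟩ else 0
    have hggbar : ∀ x ∈ U, (ggbar x : Ps) = gg x := by
      intro x hx
      simp only [ggbar, dif_pos hx]
    -- ggbar is in H_v^∞(U, Gsub)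
    have hHv : HvBdd U v ggbar := by
      constructor
      · exact my_codRestrict_diffOn Gsub hGclosed hU hggdiff hmemgg ggbar hggbar
      · refine ⟨max Mf 1, ?_⟩
        rintro y ⟨x, hx, rfl⟩
        show v x * ‖ggbar x‖ ≤ max Mf 1
        have hvx : 0 < v x := hv.2 x hx
        have hnorm : ‖ggbar x‖ = ‖gg x‖ := by
          rw [← Submodule.norm_coe (ggbar x), hggbar x hx]
        rw [hnorm]
        have b1 : v x * ‖(gg x).1‖ ≤ Mf := by
          show v x * ‖Set.indicator U f x‖ ≤ Mf
          rw [Set.indicator_of_mem hx]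
          exact hMf' x hx
        have b2 : v x * ‖(gg x).2.1‖ ≤ 1 := by
          have h2 : ‖(gg x).2.1‖ ≤ (v x)⁻¹ := by
            apply lp.norm_le_of_forall_le (inv_nonneg.2 hvx.le)
            intro h
            exact my_le_inv hvx (h.2.2.1 x hx)
          calc v x * ‖(gg x).2.1‖ ≤ v x * (v x)⁻¹ := mul_le_mul_of_nonneg_left h2 hvx.le
            _ = 1 := mul_inv_cancel₀ hvx.ne'
        have b3 : v x * ‖(gg x).2.2‖ ≤ 1 := by
          have h2 : ‖(gg x).2.2‖ ≤ (v x)⁻¹ := by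
            apply lp.norm_le_of_forall_le (inv_nonneg.2 hvx.le)
            intro n
            show ‖((cn n : ℝ) : ℂ) • Set.indicator U (gs n) x‖ ≤ (v x)⁻¹
            rw [Set.indicator_of_mem hx, norm_smul, Complex.norm_real, Real.norm_eq_abs,
              abs_of_pos (hcpos n)]
            exact my_le_inv hvx (hgb n x hx)
          calc v x * ‖(gg x).2.2‖ ≤ v x * (v x)⁻¹ := mul_le_mul_of_nonneg_left h2 hvx.le
            _ = 1 := mul_inv_cancel₀ hvx.ne'
        have hmax : v x * ‖gg x‖
            = max (v x * ‖(gg x).1‖) (max (v x * ‖(gg x).2.1‖) (v x * ‖(gg x).2.2‖)) := by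
          rw [Prod.norm_def (gg x), Prod.norm_def (gg x).2]
          rw [mul_max_of_nonneg _ _ hvx.le, mul_max_of_nonneg _ _ hvx.le]
        rw [hmax]
        apply max_le (b1.trans (le_max_left _ _))
        exact max_le (b2.trans (le_max_right _ _)) (b3.trans (le_max_right _ _))
    -- the operators
    let T : Gsub →L[ℂ] F.α := (ContinuousLinearMap.fst ℂ F.α (L1 × L2)).comp Gsub.subtypeL
    have heqT : ∀ x ∈ U, f x = T (ggbar x) := by
      intro x hx
      have : (ggbar x : Ps) = gg x := hggbar x hx
      show f x = ((ggbar x : Ps)).1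
      rw [this]
      show f x = Set.indicator U f x
      rw [Set.indicator_of_mem hx]
    refine ⟨⟨Gsub⟩, T, ggbar, ?_, hHv, heqT⟩
    -- T is in the closure of A
    intro ε hε
    obtain ⟨n, hn⟩ := exists_nat_one_div_lt hε
    have hcne : ((cn n : ℝ) : ℂ) ≠ 0 := Complex.ofReal_ne_zero.2 (hcpos n).ne'
    have hncne : ((n : ℂ) + 1) ≠ 0 := by
      have h1 : ((n:ℝ) + 1 : ℝ) ≠ 0 := by positivity
      rw [show ((n:ℂ) + 1) = (((n:ℝ) + 1 : ℝ) : ℂ) by push_cast; ring]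
      exact Complex.ofReal_ne_zero.2 h1
    set SS : F.α →L[ℂ] F.α := ((cn n : ℝ) : ℂ)⁻¹ • ContinuousLinearMap.id ℂ F.α with hSS
    set RRfull : Ps →L[ℂ] (Gs n).α :=
      (myLpProj (fun k : ℕ => (Gs k).α) n).comp
        ((ContinuousLinearMap.snd ℂ L1 L2).comp (ContinuousLinearMap.snd ℂ F.α (L1 × L2)))
      with hRRfull
    set Sfull : Ps →L[ℂ] F.α := (SS.comp (Ts n)).comp RRfull with hSfull
    set Tfull : Ps →L[ℂ] F.α := ContinuousLinearMap.fst ℂ F.α (L1 × L2) with hTfull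
    refine ⟨(SS.comp (Ts n)).comp (RRfull.comp Gsub.subtypeL), ?_, ?_⟩
    · exact hA.comp_mem ⟨Gsub⟩ (Gs n) F F (RRfull.comp Gsub.subtypeL) (Ts n) SS (hTs n)
    · -- norm estimate
      have hnormn : ‖((n : ℂ) + 1)‖ = (n : ℝ) + 1 := by
        rw [show ((n:ℂ) + 1) = (((n:ℝ) + 1 : ℝ) : ℂ) by push_cast; ring, Complex.norm_real,
          Real.norm_eq_abs, abs_of_pos (by positivity)]
      have hkey : ∀ p ∈ Gsub, ‖Tfull p - Sfull p‖ ≤ (1 / ((n:ℝ) + 1)) * ‖p‖ := by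
        have hclosed : IsClosed {p : Ps | ‖Tfull p - Sfull p‖ ≤ (1 / ((n:ℝ) + 1)) * ‖p‖} := by
          apply isClosed_le
          · exact (Tfull.continuous.sub Sfull.continuous).norm
          · exact continuous_const.mul continuous_norm
        have hsubset : (Submodule.span ℂ (gg '' U) : Set Ps) ⊆
            {p : Ps | ‖Tfull p - Sfull p‖ ≤ (1 / ((n:ℝ) + 1)) * ‖p‖} := by
          intro p hp
          obtain ⟨k, lam, gvec, hsum⟩ := Submodule.mem_span_set'.1 hp
          have hpts : ∀ i : Fin k, (gvec i : Ps) ∈ gg '' U := fun i => (gvec i).2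
          choose xs hxsU hxseq using hpts
          have hTpt : ∀ i, Tfull (gg (xs i)) = f (xs i) := by
            intro i
            show Set.indicator U f (xs i) = f (xs i)
            exact Set.indicator_of_mem (hxsU i) f
          have hSpt : ∀ i, Sfull (gg (xs i)) = Ts n (gs n (xs i)) := by
            intro i
            show SS (Ts n (((cn n : ℝ) : ℂ) • Set.indicator U (gs n) (xs i))) = _
            rw [Set.indicator_of_mem (hxsU i), map_smul]
            show ((cn n : ℝ) : ℂ)⁻¹ • (((cn n : ℝ) : ℂ) • Ts n (gs n (xs i))) = _
            rw [smul_smul, inv_mul_cancel₀ hcne, one_smul]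
          have hy : Tfull p - Sfull p = ∑ i, lam i • (f (xs i) - Ts n (gs n (xs i))) := by
            have h1 : Tfull p = ∑ i, lam i • f (xs i) := by
              rw [← hsum, map_sum]
              refine Finset.sum_congr rfl (fun i _ => ?_)
              rw [map_smul, ← hxseq i, hTpt i]
            have h2 : Sfull p = ∑ i, lam i • Ts n (gs n (xs i)) := by
              rw [← hsum, map_sum]
              refine Finset.sum_congr rfl (fun i _ => ?_)
              rw [map_smul, ← hxseq i, hSpt i]
            rw [h1, h2, ← Finset.sum_sub_distrib]
            refine Finset.sum_congr rfl (fun i _ => ?_)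
            rw [smul_sub]
          obtain ⟨ψ, hψ1, hψ2⟩ := exists_dual_vector'' ℂ (Tfull p - Sfull p)
          set innerf : E.α → ℂ := fun x => ((n : ℂ) + 1) * ψ (f x - Ts n (gs n x)) with hinner
          have hBHd : DifferentiableOn ℂ innerf U := by
            apply DifferentiableOn.const_mul
            exact ψ.differentiable.comp_differentiableOn
              (hf.1.sub ((Ts n).differentiable.comp_differentiableOn (hgs n).1))
          have hhd : DifferentiableOn ℂ (Set.indicator U innerf) U :=
            hBHd.congr (fun x hx => Set.indicator_of_mem hx innerf)
          have hψle : ∀ z : F.α, ‖ψ z‖ ≤ ‖z‖ := by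
            intro z
            calc ‖ψ z‖ ≤ ‖ψ‖ * ‖z‖ := ψ.le_opNorm z
              _ ≤ 1 * ‖z‖ := mul_le_mul_of_nonneg_right hψ1 (norm_nonneg z)
              _ = ‖z‖ := one_mul _
          have hhb : ∀ x ∈ U, v x * ‖Set.indicator U innerf x‖ ≤ 1 := by
            intro x hx
            rw [Set.indicator_of_mem hx]
            have hvx : (0:ℝ) ≤ v x := (hv.2 x hx).le
            have hz : v x * ‖f x - Ts n (gs n x)‖ ≤ 1 / ((n:ℝ) + 1) := hap n x hx
            show v x * ‖((n : ℂ) + 1) * ψ (f x - Ts n (gs n x))‖ ≤ 1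
            rw [norm_mul, hnormn]
            calc v x * (((n:ℝ) + 1) * ‖ψ (f x - Ts n (gs n x))‖)
                = ((n:ℝ) + 1) * (v x * ‖ψ (f x - Ts n (gs n x))‖) := by ring
              _ ≤ ((n:ℝ) + 1) * (v x * ‖f x - Ts n (gs n x)‖) := by
                  apply mul_le_mul_of_nonneg_left _ (by positivity)
                  exact mul_le_mul_of_nonneg_left (hψle _) hvx
              _ ≤ ((n:ℝ) + 1) * (1 / ((n:ℝ) + 1)) := mul_le_mul_of_nonneg_left hz (by positivity)
              _ = 1 := by field_simp
          have hhz : ∀ x ∉ U, Set.indicator U innerf x = 0 :=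
            fun x hx => Set.indicator_of_notMem hx _
          set hh : BH := ⟨Set.indicator U innerf, hhd, hhb, hhz⟩ with hhh
          set Ev : Ps →L[ℂ] ℂ := (myLpProj (fun _ : BH => ℂ) hh).comp
            ((ContinuousLinearMap.fst ℂ L1 L2).comp (ContinuousLinearMap.snd ℂ F.α (L1 × L2)))
            with hEvdef
          have hEvpt : ∀ i, Ev (gg (xs i)) = ((n : ℂ) + 1) * ψ (f (xs i) - Ts n (gs n (xs i))) := by
            intro i
            show hh.1 (xs i) = _
            show Set.indicator U innerf (xs i) = _
            rw [Set.indicator_of_mem (hxsU i)]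
          have hEvbound : ‖Ev p‖ ≤ ‖p‖ := by
            have e1 : ‖Ev p‖ ≤ ‖p.2.1‖ := by
              show ‖(p.2.1 : BH → ℂ) hh‖ ≤ ‖p.2.1‖
              exact lp.norm_apply_le_norm ENNReal.top_ne_zero p.2.1 hh
            calc ‖Ev p‖ ≤ ‖p.2.1‖ := e1
              _ ≤ ‖p.2‖ := norm_fst_le p.2
              _ ≤ ‖p‖ := norm_snd_le p
          have hEvp : Ev p = ((n:ℂ) + 1) * ψ (Tfull p - Sfull p) := by
            have h1 : Ev p = ∑ i, lam i • (((n:ℂ) + 1) * ψ (f (xs i) - Ts n (gs n (xs i)))) := by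
              rw [← hsum, map_sum]
              refine Finset.sum_congr rfl (fun i _ => ?_)
              rw [map_smul, ← hxseq i, hEvpt i]
            have h2 : ψ (Tfull p - Sfull p)
                = ∑ i, lam i • ψ (f (xs i) - Ts n (gs n (xs i))) := by
              rw [hy, map_sum]
              refine Finset.sum_congr rfl (fun i _ => ?_)
              rw [map_smul]
            rw [h1, h2, Finset.mul_sum]
            refine Finset.sum_congr rfl (fun i _ => ?_)
            rw [smul_eq_mul, smul_eq_mul]
            ring
          have hψeq : ψ (Tfull p - Sfull p) = ((n:ℂ) + 1)⁻¹ * Ev p := by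
            rw [hEvp, ← mul_assoc, inv_mul_cancel₀ hncne, one_mul]
          have hnormy : ‖Tfull p - Sfull p‖ = ‖ψ (Tfull p - Sfull p)‖ := by
            rw [hψ2, RCLike.norm_ofReal, abs_of_nonneg (norm_nonneg _)]
          show ‖Tfull p - Sfull p‖ ≤ (1 / ((n:ℝ) + 1)) * ‖p‖
          rw [hnormy, hψeq, norm_mul, norm_inv, hnormn, ← one_div]
          apply mul_le_mul_of_nonneg_left hEvbound (by positivity)
        intro p hp
        have hsub2 : (Gsub : Set Ps) ⊆
            {p : Ps | ‖Tfull p - Sfull p‖ ≤ (1 / ((n:ℝ) + 1)) * ‖p‖} := by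
          have : (Gsub : Set Ps) = closure (Submodule.span ℂ (gg '' U) : Set Ps) :=
            Submodule.topologicalClosure_coe _
          rw [this]
          exact closure_minimal hsubset hclosed
        exact hsub2 hp
      have hopn : ‖T - (SS.comp (Ts n)).comp (RRfull.comp Gsub.subtypeL)‖ ≤ 1 / ((n:ℝ) + 1) := by
        apply ContinuousLinearMap.opNorm_le_bound _ (by positivity)
        intro ξ
        have h1 : (T - (SS.comp (Ts n)).comp (RRfull.comp Gsub.subtypeL)) ξ
            = Tfull (ξ : Ps) - Sfull (ξ : Ps) := rfl
        rw [h1, ← Submodule.norm_coe ξ]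
        exact hkey (ξ : Ps) ξ.2
      exact hopn.trans hn.le

end
end
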